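/- For n = 2, let A_σ = [[1+σ, −σ], [−σ, 1+σ]] for σ ≥ 0. Let B ∈ ℝ^{2×2} be symmetric with eigenvalues μ₁ > 0 > μ₂, and let v be a unit eigenvector of B associated with μ₁. Then there exists a nonzero vector p ∈ ℝ² that is, for every σ ≥ 0, an eigenvector of A_σ^{-1}B associated with a positive eigenvalue, if and only if v ∈ span{(1,1)ᵀ} or v ∈ span{(1,−1)ᵀ}. (Equivalently: the σ-independent attraction-region subspace W of the modified LSGD has dimension 1 exactly in this case, and dimension 0 otherwise.) -/
import Mathlib

open Matrix

/-- The 2×2 Laplacian smoothing matrix `A_σ = [[1+σ, -σ], [-σ, 1+σ]]`. -/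
noncomputable def A2 (σ : ℝ) : Matrix (Fin 2) (Fin 2) ℝ := !![1 + σ, -σ; -σ, 1 + σ]

private lemma mulVec2 (M : Matrix (Fin 2) (Fin 2) ℝ) (x : Fin 2 → ℝ) (i : Fin 2) :
    M.mulVec x i = M i 0 * x 0 + M i 1 * x 1 := by
  simp [Matrix.mulVec, dotProduct, Fin.sum_univ_two]

private lemma detA2 (σ : ℝ) (hσ : 0 ≤ σ) : IsUnit (A2 σ).det := by
  have : (A2 σ).det = 1 + 2 * σ := by
    simp [A2, Matrix.det_fin_two_of]; ring
  rw [this]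
  exact (by positivity : (0:ℝ) < 1 + 2*σ).ne'.isUnit

theorem stmt18 (B : Matrix (Fin 2) (Fin 2) ℝ) (hBsymm : B.IsSymm)
    (μ₁ μ₂ : ℝ) (hμ₁ : 0 < μ₁) (hμ₂ : μ₂ < 0)
    -- `v` is a unit eigenvector of `B` associated with the positive eigenvalue `μ₁`:
    (v : Fin 2 → ℝ) (hv : B.mulVec v = μ₁ • v) (hvunit : v 0 ^ 2 + v 1 ^ 2 = 1)
    -- and `μ₂ < 0` is an eigenvalue of `B`:
    (w : Fin 2 → ℝ) (hw0 : w ≠ 0) (hw : B.mulVec w = μ₂ • w) :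
    -- there is a nonzero vector that is, for every `σ ≥ 0`, an eigenvector of
    -- `A_σ⁻¹B` associated with a positive eigenvalue, iff `v ∈ span{(1,1)ᵀ}` or
    -- `v ∈ span{(1,-1)ᵀ}`:
    (∃ p : Fin 2 → ℝ, p ≠ 0 ∧ ∀ σ : ℝ, 0 ≤ σ → ∃ lam : ℝ, 0 < lam ∧
        ((A2 σ)⁻¹ * B).mulVec p = lam • p) ↔
      (v ∈ Submodule.span ℝ {![(1 : ℝ), 1]} ∨ v ∈ Submodule.span ℝ {![(1 : ℝ), -1]}) := by
  have hsym : B 1 0 = B 0 1 := hBsymm.apply 0 1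
  constructor
  · rintro ⟨p, hp0, hall⟩
    -- σ = 0 gives that p is an eigenvector of B with positive eigenvalue l0
    obtain ⟨l0, hl0pos, hl0⟩ := hall 0 le_rfl
    have hA0 : A2 0 = 1 := by
      rw [A2, Matrix.one_fin_two]; norm_num
    rw [hA0, inv_one, one_mul] at hl0
    -- σ = 1 gives B p = l1 • (A2 1) p
    obtain ⟨l1, hl1pos, hl1⟩ := hall 1 zero_le_one
    have hB1 : B.mulVec p = l1 • (A2 1).mulVec p := by
      have h := congrArg (A2 1).mulVec hl1
      rw [Matrix.mulVec_smul] at h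
      rw [Matrix.mulVec_mulVec, ← Matrix.mul_assoc,
        Matrix.mul_nonsing_inv _ (detA2 1 zero_le_one), Matrix.one_mul] at h
      exact h
    -- componentwise equations
    have e0 := congrFun (hl0.symm.trans hB1) 0
    have e1 := congrFun (hl0.symm.trans hB1) 1
    simp only [Pi.smul_apply, smul_eq_mul, mulVec2, A2] at e0 e1
    norm_num [Matrix.cons_val_zero, Matrix.cons_val_one] at e0 e1
    -- p is parallel to (1,1) or (1,-1)
    have hcase : p 1 = p 0 ∨ p 1 = - p 0 := by
      by_contra hc
      push_neg at hc
      obtain ⟨h1, h2⟩ := hc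
      have d1 : p 0 - p 1 ≠ 0 := fun h => h1 (by linarith [sub_eq_zero.mp h])
      have d2 : p 0 + p 1 ≠ 0 := fun h => h2 (by linarith)
      have k1 : l0 * (p 0 - p 1) = 3 * l1 * (p 0 - p 1) := by linarith
      have k2 : l0 * (p 0 + p 1) = l1 * (p 0 + p 1) := by linarith
      have : l0 = 3 * l1 := mul_right_cancel₀ d1 k1
      have : l0 = l1 := mul_right_cancel₀ d2 k2
      linarith
    have hp00 : p 0 ≠ 0 := by
      intro h
      apply hp0
      funext i
      fin_cases i
      · exact h
      · rcases hcase with h' | h' <;> simp [h', h]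
    -- scalar eigen-equations
    have hv0 := congrFun hv 0; have hv1 := congrFun hv 1
    have hw0' := congrFun hw 0; have hw1 := congrFun hw 1
    have hp0' := congrFun hl0 0; have hp1 := congrFun hl0 1
    simp only [Pi.smul_apply, smul_eq_mul, mulVec2] at hv0 hv1 hw0' hw1 hp0' hp1
    -- orthogonality of v and w
    have horth : v 0 * w 0 + v 1 * w 1 = 0 := by
      have key : (μ₁ - μ₂) * (v 0 * w 0 + v 1 * w 1) = 0 := by
        linear_combination - w 0 * hv0 - w 1 * hv1 + v 0 * hw0' + v 1 * hw1
          - (v 1 * w 0 - v 0 * w 1) * hsym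
      have hne : μ₁ - μ₂ ≠ 0 := by linarith
      exact (mul_eq_zero.mp key).resolve_left hne
    set c : ℝ := w 1 * v 0 - w 0 * v 1 with hc_def
    have hw0e : w 0 = -c * v 1 := by
      linear_combination v 0 * horth - w 0 * hvunit
    have hw1e : w 1 = c * v 0 := by
      linear_combination v 1 * horth - w 1 * hvunit
    have hcne : c ≠ 0 := by
      intro h
      apply hw0
      have h0 : w 0 = 0 := by rw [hw0e, h]; ring
      have h1 : w 1 = 0 := by rw [hw1e, h]; ring
      funext i
      fin_cases i <;> simp [h0, h1]
    rw [hw0e, hw1e] at hw0' hw1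
    have e3 : -(B 0 0) * v 1 + B 0 1 * v 0 = -μ₂ * v 1 :=
      mul_left_cancel₀ hcne (by linear_combination hw0')
    have e4 : -(B 1 0) * v 1 + B 1 1 * v 0 = μ₂ * v 0 :=
      mul_left_cancel₀ hcne (by linear_combination hw1)
    have hb : (l0 - μ₂) * (p 1 * v 0 - p 0 * v 1) = 0 := by
      linear_combination v 1 * hp0' - v 0 * hp1 + p 0 * e3 + p 1 * e4
        + (v 0 * p 0 + v 1 * p 1) * hsym
    have hb0 : p 1 * v 0 - p 0 * v 1 = 0 := by
      have hne : l0 - μ₂ ≠ 0 := by linarith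
      exact (mul_eq_zero.mp hb).resolve_left hne
    rcases hcase with h' | h'
    · -- v 1 = v 0, so v ∈ span {(1,1)}
      have hvv : v 1 = v 0 := by
        have h2 : p 0 * (v 0 - v 1) = 0 := by linear_combination hb0 - v 0 * h'
        have := (mul_eq_zero.mp h2).resolve_left hp00
        linarith [sub_eq_zero.mp this]
      left
      exact Submodule.mem_span_singleton.2 ⟨v 0, by
        funext i; fin_cases i <;> simp [hvv]⟩
    · -- v 1 = -v 0, so v ∈ span {(1,-1)}
      have hvv : v 1 = -v 0 := by
        have h2 : p 0 * (v 0 + v 1) = 0 := by linear_combination -hb0 + v 0 * h'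
        have := (mul_eq_zero.mp h2).resolve_left hp00
        linarith
      right
      exact Submodule.mem_span_singleton.2 ⟨v 0, by
        funext i; fin_cases i <;> simp [hvv]⟩
  · -- reverse direction
    have hvne : v ≠ 0 := by
      intro h
      rw [h] at hvunit
      norm_num at hvunit
    rintro (h | h)
    · obtain ⟨t, ht⟩ := Submodule.mem_span_singleton.1 h
      have ht0 : v 0 = t := by rw [← ht]; simp
      have ht1 : v 1 = t := by rw [← ht]; simp
      refine ⟨v, hvne, fun σ hσ => ⟨μ₁, hμ₁, ?_⟩⟩
      have hAv : (A2 σ).mulVec v = v := by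
        funext i
        fin_cases i <;> simp [mulVec2, A2, ht0, ht1] <;> ring
      have hinv : (A2 σ)⁻¹.mulVec v = v := by
        conv_lhs => rw [← hAv]
        rw [Matrix.mulVec_mulVec, Matrix.nonsing_inv_mul _ (detA2 σ hσ), Matrix.one_mulVec]
      rw [← Matrix.mulVec_mulVec, hv, Matrix.mulVec_smul, hinv]
    · obtain ⟨t, ht⟩ := Submodule.mem_span_singleton.1 h
      have ht0 : v 0 = t := by rw [← ht]; simp
      have ht1 : v 1 = -t := by rw [← ht]; simp
      refine ⟨v, hvne, fun σ hσ => ⟨μ₁ / (1 + 2 * σ), by positivity, ?_⟩⟩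
      have h12 : (0:ℝ) < 1 + 2 * σ := by positivity
      have hAv : (A2 σ).mulVec v = (1 + 2 * σ) • v := by
        funext i
        fin_cases i <;> simp [mulVec2, A2, ht0, ht1] <;> ring
      have hinv : (A2 σ)⁻¹.mulVec v = (1 + 2 * σ)⁻¹ • v := by
        have h1 : (A2 σ)⁻¹.mulVec ((A2 σ).mulVec v) = v := by
          rw [Matrix.mulVec_mulVec, Matrix.nonsing_inv_mul _ (detA2 σ hσ),
            Matrix.one_mulVec]
        rw [hAv, Matrix.mulVec_smul] at h1
        calc (A2 σ)⁻¹.mulVec v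
            = (1 + 2*σ)⁻¹ • ((1 + 2*σ) • (A2 σ)⁻¹.mulVec v) := by
              rw [smul_smul, inv_mul_cancel₀ h12.ne', one_smul]
          _ = (1 + 2*σ)⁻¹ • v := by rw [h1]
      rw [← Matrix.mulVec_mulVec, hv, Matrix.mulVec_smul, hinv, smul_smul,
        div_eq_mul_inv]
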